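/- For each index i, the real function f(t) = ℓ evaluated with the diagonal entry a_i of A replaced by t (keeping all other entries of A, V, μ fixed) is twice differentiable at t = a_i and its second derivative equals −(1/2)·(Σ_{ii})², where Σ_{ii} is the (i,i)-entry of Σ = Ω⁻¹. -/

import Mathlib

open Matrix

noncomputable def gaussLRLL (D R : ℕ) (y μ : Fin D → ℝ) (a : Fin D → ℝ)
    (V : Matrix (Fin D) (Fin R) ℝ) : ℝ :=
  -((D : ℝ) / 2) * Real.log (2 * Real.pi)
    + (1 / 2) * Real.log (Matrix.diagonal a + V * V.transpose).det
    - (1 / 2) * ((y - μ) ⬝ᵥ (Matrix.diagonal a + V * V.transpose).mulVec (y - μ))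

section aux

variable {D R : ℕ} (a : Fin D → ℝ) (V : Matrix (Fin D) (Fin R) ℝ) (i : Fin D)

lemma omega_update (t : ℝ) :
    Matrix.diagonal (Function.update a i t) + V * V.transpose =
      (Matrix.diagonal a + V * V.transpose).updateRow i
        ((((Matrix.diagonal a + V * V.transpose) i : Fin D → ℝ) + (t - a i) • (Pi.single i (1:ℝ) : Fin D → ℝ))) := by
  ext j k
  by_cases h : j = i
  · subst h
    by_cases h2 : k = j
    · subst h2
      simp [Matrix.add_apply, Matrix.diagonal_apply, Pi.single_apply]
      ring
    · simp [Matrix.add_apply, Matrix.diagonal_apply, Function.update_of_ne (Ne.symm h2),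
        Pi.single_apply, Ne.symm h2]
  · simp only [Matrix.updateRow_ne h, Matrix.add_apply, Matrix.diagonal_apply]
    congr 1
    by_cases hjk : j = k
    · subst hjk; simp [Function.update_of_ne h]
    · simp [hjk]

lemma det_update (t : ℝ) :
    (Matrix.diagonal (Function.update a i t) + V * V.transpose).det =
      (Matrix.diagonal a + V * V.transpose).det
        + (t - a i) * (Matrix.diagonal a + V * V.transpose).adjugate i i := by
  rw [omega_update a V i t, Matrix.det_updateRow_add, Matrix.det_updateRow_smul,
    Matrix.updateRow_eq_self, Matrix.adjugate_apply]

lemma quad_update (y μ : Fin D → ℝ) (t : ℝ) :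
    ((y - μ) ⬝ᵥ (Matrix.diagonal (Function.update a i t) + V * V.transpose).mulVec (y - μ)) =
      ((y - μ) ⬝ᵥ (Matrix.diagonal a + V * V.transpose).mulVec (y - μ))
        + (t - a i) * ((y - μ) i) ^ 2 := by
  rw [omega_update a V i t]
  set r := y - μ
  set M := Matrix.diagonal a + V * V.transpose
  have key : (M.updateRow i (((M i : Fin D → ℝ)) + (t - a i) • (Pi.single i (1:ℝ) : Fin D → ℝ))).mulVec r =
      M.mulVec r + fun j => if j = i then (t - a i) * r i else 0 := by
    funext j
    by_cases h : j = i
    · subst h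
      simp only [Matrix.mulVec, Matrix.updateRow_self, dotProduct, Pi.add_apply,
        Pi.smul_apply, Pi.single_apply, smul_eq_mul, add_mul, Finset.sum_add_distrib,
        if_pos rfl]
      congr 1
      rw [Finset.sum_eq_single j]
      · simp
      · intro k _ hk; simp [hk]
      · simp
    · simp [Matrix.mulVec, Matrix.updateRow_ne h, h]
  rw [key, dotProduct_add]
  congr 1
  simp only [dotProduct]
  rw [Finset.sum_eq_single i]
  · simp; ring
  · intro k _ hk; simp [hk]
  · simp

end aux

/-- Second partial derivative of the low-rank Gaussian log-likelihood with respect to the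
diagonal entry `a_i`: the map `t ↦ ℓ(a(t))` is twice differentiable at `t = a i` and its
second derivative equals `-(1/2)·(Σ_{ii})²` where `Σ = Ω⁻¹`. -/
theorem gaussLR_deriv2_a (D R : ℕ) (hD : 1 ≤ D) (y μ : Fin D → ℝ)
    (a : Fin D → ℝ) (ha : ∀ k, 0 < a k)
    (V : Matrix (Fin D) (Fin R) ℝ) (i : Fin D) :
    (∀ᶠ t in nhds (a i),
        DifferentiableAt ℝ (fun t : ℝ => gaussLRLL D R y μ (Function.update a i t) V) t) ∧
      HasDerivAt (deriv (fun t : ℝ => gaussLRLL D R y μ (Function.update a i t) V))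
        (-(1 / 2) * (((Matrix.diagonal a + V * V.transpose)⁻¹) i i) ^ 2)
        (a i) := by
  set Ω := Matrix.diagonal a + V * V.transpose with hΩ
  set c := Ω.det with hc
  set b := Ω.adjugate i i with hb
  set r := y - μ with hr
  set q := r ⬝ᵥ Ω.mulVec r with hq
  have hpos : Ω.PosDef := by
    apply Matrix.PosDef.add_posSemidef
    · exact Matrix.posDef_diagonal_iff.mpr fun k => ha k
    · have := Matrix.posSemidef_self_mul_conjTranspose V
      simpa [Matrix.conjTranspose_eq_transpose_of_trivial] using this
  have hcpos : 0 < c := hpos.det_pos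
  have hf : (fun t : ℝ => gaussLRLL D R y μ (Function.update a i t) V) =
      fun t => -((D : ℝ) / 2) * Real.log (2 * Real.pi)
        + (1 / 2) * Real.log (c + (t - a i) * b)
        - (1 / 2) * (q + (t - a i) * (r i) ^ 2) := by
    funext t
    rw [gaussLRLL, det_update a V i t, quad_update a V i y μ t]
  -- g and its positivity near a i
  have hgc : Continuous fun t : ℝ => c + (t - a i) * b := by continuity
  have hev : ∀ᶠ t in nhds (a i), 0 < c + (t - a i) * b := by
    have h0 : (0 : ℝ) < c + (a i - a i) * b := by simpa using hcpos
    have := hgc.continuousAt (x := a i)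
    exact this.eventually_mem (Ioi_mem_nhds h0)
  -- HasDerivAt of f where g positive
  have hder : ∀ t : ℝ, 0 < c + (t - a i) * b →
      HasDerivAt (fun t : ℝ => gaussLRLL D R y μ (Function.update a i t) V)
        ((1 / 2) * (b / (c + (t - a i) * b)) - (1 / 2) * (r i) ^ 2) t := by
    intro t ht
    rw [hf]
    have hg : HasDerivAt (fun t : ℝ => c + (t - a i) * b) b t := by
      simpa using (((hasDerivAt_id t).sub_const (a i)).mul_const b).const_add c
    have hlog : HasDerivAt (fun t : ℝ => Real.log (c + (t - a i) * b))
        (b / (c + (t - a i) * b)) t := hg.log ht.ne'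
    have hq2 : HasDerivAt (fun t : ℝ => q + (t - a i) * (r i) ^ 2) ((r i) ^ 2) t := by
      simpa using (((hasDerivAt_id t).sub_const (a i)).mul_const ((r i) ^ 2)).const_add q
    exact ((hlog.const_mul (1 / 2)).const_add
      (-((D : ℝ) / 2) * Real.log (2 * Real.pi))).sub (hq2.const_mul (1 / 2))
  have hdiff : ∀ᶠ t in nhds (a i),
      DifferentiableAt ℝ (fun t : ℝ => gaussLRLL D R y μ (Function.update a i t) V) t :=
    hev.mono fun t ht => (hder t ht).differentiableAt
  refine ⟨hdiff, ?_⟩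
  -- deriv f agrees with formula near a i
  have hderiv_eq : (deriv (fun t : ℝ => gaussLRLL D R y μ (Function.update a i t) V))
      =ᶠ[nhds (a i)] fun t => (1 / 2) * (b / (c + (t - a i) * b)) - (1 / 2) * (r i) ^ 2 :=
    hev.mono fun t ht => (hder t ht).deriv
  -- derivative of the formula at a i
  have hg0 : HasDerivAt (fun t : ℝ => c + (t - a i) * b) b (a i) := by
    simpa using (((hasDerivAt_id (a i)).sub_const (a i)).mul_const b).const_add c
  have hne : c + (a i - a i) * b ≠ 0 := by simpa using hcpos.ne'
  have hinv : HasDerivAt (fun t : ℝ => (c + (t - a i) * b)⁻¹)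
      (-b / (c + (a i - a i) * b) ^ 2) (a i) := hg0.inv hne
  have hform : HasDerivAt
      (fun t : ℝ => (1 / 2) * (b / (c + (t - a i) * b)) - (1 / 2) * (r i) ^ 2)
      (-(1 / 2) * (b / c) ^ 2) (a i) := by
    have h1 : HasDerivAt (fun t : ℝ => (1 / 2) * (b / (c + (t - a i) * b)))
        ((1 / 2) * (b * (-b / (c + (a i - a i) * b) ^ 2))) (a i) := by
      simp only [div_eq_mul_inv]
      exact (hinv.const_mul b).const_mul (1 / 2)
    have := h1.sub_const ((1 / 2) * (r i) ^ 2)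
    refine this.congr_deriv ?_
    have : c + (a i - a i) * b = c := by ring
    rw [this]
    field_simp
  -- identify b / c with Ω⁻¹ i i
  have hSigma : Ω⁻¹ i i = c⁻¹ * b := by
    rw [Matrix.inv_def, Ring.inverse_eq_inv']
    simp [Matrix.smul_apply, hb, hc]
  have : -(1 / 2) * (b / c) ^ 2 = -(1 / 2) * (Ω⁻¹ i i) ^ 2 := by
    rw [hSigma]; field_simp
  rw [← this]
  exact hform.congr_of_eventuallyEq hderiv_eq
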